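/- arXiv:1104.3316 — 2 statements merged into one kernel-verified Lean document; each statement's English description precedes it below -/
import Mathlib

section
/- There is a bijection between irreducible RNA secondary structures of length n and arbitrary RNA secondary structures of length n−2, for all n ≥ 3, given on tableaux by deleting λ_1 and λ_{n-1} and removing one square from each intermediate shape. -/
open Finset Filter Topology Asymptotics

/-- An RNA secondary structure of length `n`: a set of arcs `(i,j)`, `1 ≤ i < j ≤ n`,
which form a partial matching (no shared endpoints), are noncrossing, and contain
no 1-arc `(i,i+1)`. -/
def IsSecStr (n : ℕ) (A : Finset (ℕ × ℕ)) : Prop :=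
  (∀ p ∈ A, 1 ≤ p.1 ∧ p.1 < p.2 ∧ p.2 ≤ n ∧ p.2 ≠ p.1 + 1) ∧
  (∀ p ∈ A, ∀ q ∈ A, p ≠ q →
    p.1 ≠ q.1 ∧ p.1 ≠ q.2 ∧ p.2 ≠ q.1 ∧ p.2 ≠ q.2) ∧
  (∀ p ∈ A, ∀ q ∈ A, ¬ (p.1 < q.1 ∧ q.1 < p.2 ∧ p.2 < q.2))

/-- `s(n)`: the number of RNA secondary structures of length `n`. -/
noncomputable def secCount (n : ℕ) : ℕ :=
  Nat.card {A : Finset (ℕ × ℕ) // IsSecStr n A}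

/-- The diagram graph of a secondary structure: backbone edges `(i,i+1)` together
with the arcs, on vertices `1,…,n`. -/
def diagGraph (n : ℕ) (A : Finset (ℕ × ℕ)) : SimpleGraph ℕ where
  Adj i j := i ≠ j ∧ 1 ≤ i ∧ i ≤ n ∧ 1 ≤ j ∧ j ≤ n ∧
    (j = i + 1 ∨ i = j + 1 ∨ (i, j) ∈ A ∨ (j, i) ∈ A)
  symm := by
    refine ⟨?_⟩
    rintro i j ⟨h1, h2, h3, h4, h5, h6⟩
    exact ⟨h1.symm, h4, h5, h2, h3, by tauto⟩
  loopless := by refine ⟨?_⟩; rintro i ⟨h1, _⟩; exact h1 rfl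

/-- The 5'-3' distance of a secondary structure: the graph distance from
vertex `1` to vertex `n` in its diagram. -/
noncomputable def secDist (n : ℕ) (A : Finset (ℕ × ℕ)) : ℕ :=
  (diagGraph n A).dist 1 n

/-- `w(n,d)`: the number of secondary structures of length `n` with 5'-3' distance `d`. -/
noncomputable def wCount (n d : ℕ) : ℕ :=
  Nat.card {A : Finset (ℕ × ℕ) // IsSecStr n A ∧ secDist n A = d}

/-- The dominant singularity `ρ = (3 − √5)/2`. -/
noncomputable def rho : ℝ := (3 - Real.sqrt 5) / 2

/-- The generating function of RNA secondary structures, in closed form. -/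
noncomputable def Sfun (z : ℝ) : ℝ :=
  (1 - z + z ^ 2 - Real.sqrt ((z ^ 2 + z + 1) * (z ^ 2 - 3 * z + 1))) / (2 * z ^ 2)

/-- The bivariate generating function `W(z,u)`, in closed form. -/
noncomputable def Wfun (z u : ℝ) : ℝ :=
  u * z ^ 2 * (Sfun z - 1) /
    ((1 - z * u) ^ 2 - (1 - z * u) * (z * u) ^ 2 * (Sfun z - 1)) + z / (1 - z * u)

/-- `cov A j`: the number of arcs of `A` covering the gap between vertices `j` and `j+1`
(equivalently, the size of the shape of the associated 1-tableau at that gap). -/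
def cov (A : Finset (ℕ × ℕ)) (j : ℕ) : ℕ :=
  (A.filter (fun p => p.1 ≤ j ∧ j < p.2)).card

/-- An irreducible secondary structure: the associated tableau never returns to the
empty shape strictly between the two ends, i.e. every interior gap is covered by an arc. -/
def IsIrr (n : ℕ) (A : Finset (ℕ × ℕ)) : Prop :=
  IsSecStr n A ∧ 2 ≤ n ∧ ∀ j, 1 ≤ j → j ≤ n - 1 → 1 ≤ cov A j

/-- `i(n)`: the number of irreducible secondary structures of length `n`. -/
noncomputable def irrCount (n : ℕ) : ℕ :=
  Nat.card {A : Finset (ℕ × ℕ) // IsIrr n A}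

lemma exists_cov {A : Finset (ℕ × ℕ)} {j : ℕ} (h : 1 ≤ cov A j) :
    ∃ p ∈ A, p.1 ≤ j ∧ j < p.2 := by
  obtain ⟨p, hp⟩ := Finset.card_pos.mp h
  rw [Finset.mem_filter] at hp
  exact ⟨p, hp.1, hp.2⟩

lemma arc_one_n {n : ℕ} {A : Finset (ℕ × ℕ)} (hn : 3 ≤ n) (h : IsIrr n A) :
    (1, n) ∈ A := by
  obtain ⟨p, hpA, hp1, hp2⟩ := exists_cov (h.2.2 1 le_rfl (by omega))
  obtain ⟨hv1, hv2, hv3, hv4⟩ := h.1.1 p hpA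
  have hp1' : p.1 = 1 := by omega
  -- claim p.2 = n
  by_cases hpn : p.2 = n
  · have : p = (1, n) := by
      rcases p with ⟨a, b⟩; simp_all
    rwa [this] at hpA
  · -- p.2 ≤ n - 1, get covering arc r of gap p.2, derive contradiction
    exfalso
    obtain ⟨r, hrA, hr1, hr2⟩ := exists_cov (h.2.2 p.2 (by omega) (by omega))
    have hrp : r ≠ p := by
      intro he; rw [he] at hr1 hr2; omega
    have hm := h.1.2.1 r hrA p hpA hrp
    have hnc := h.1.2.2 p hpA r hrA
    have hrv := h.1.1 r hrA
    omega

lemma inner_arc {n : ℕ} {A : Finset (ℕ × ℕ)} (hn : 3 ≤ n) (h : IsIrr n A)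
    {p : ℕ × ℕ} (hp : p ∈ A) (hne : p ≠ (1, n)) :
    2 ≤ p.1 ∧ p.1 + 1 < p.2 ∧ p.2 ≤ n - 1 := by
  have hm := h.1.2.1 p hp (1, n) (arc_one_n hn h) hne
  have hv := h.1.1 p hp
  simp only at hm
  omega

/-- For `n ≥ 3` there is a bijection between irreducible secondary
structures of length `n` and arbitrary secondary structures of length `n − 2`. -/
theorem irr_equiv_secStr (n : ℕ) (hn : 3 ≤ n) :
    Nonempty ({A : Finset (ℕ × ℕ) // IsIrr n A} ≃
      {A : Finset (ℕ × ℕ) // IsSecStr (n - 2) A}) := by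
  classical
  set dn : ℕ × ℕ → ℕ × ℕ := fun p => (p.1 - 1, p.2 - 1) with hdn
  set up : ℕ × ℕ → ℕ × ℕ := fun p => (p.1 + 1, p.2 + 1) with hup
  set f : Finset (ℕ × ℕ) → Finset (ℕ × ℕ) := fun A => (A.erase (1, n)).image dn with hf
  set g : Finset (ℕ × ℕ) → Finset (ℕ × ℕ) :=
    fun B => insert (1, n) (B.image up) with hg
  have memf : ∀ A q, q ∈ f A ↔ ∃ p ∈ A, p ≠ (1, n) ∧ (p.1 - 1, p.2 - 1) = q := by
    intro A q
    simp only [hf, hdn, Finset.mem_image, Finset.mem_erase]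
    constructor
    · rintro ⟨p, ⟨hne, hp⟩, hE⟩; exact ⟨p, hp, hne, hE⟩
    · rintro ⟨p, hp, hne, hE⟩; exact ⟨p, ⟨hne, hp⟩, hE⟩
  have memg : ∀ B q, q ∈ g B ↔ q = (1, n) ∨ ∃ p ∈ B, (p.1 + 1, p.2 + 1) = q := by
    intro B q
    simp only [hg, hup, Finset.mem_image, Finset.mem_insert]
  -- f preserves structure
  have hfS : ∀ A, IsIrr n A → IsSecStr (n - 2) (f A) := by
    intro A hA
    refine ⟨?_, ?_, ?_⟩
    · intro q hq
      rw [memf] at hq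
      obtain ⟨p, hp, hne, hE⟩ := hq
      obtain ⟨h1, h2, h3⟩ := inner_arc hn hA hp hne
      obtain ⟨q1, q2⟩ := q
      simp only [Prod.mk.injEq] at hE
      simp only []
      omega
    · intro q hq q' hq' hqq
      rw [memf] at hq hq'
      obtain ⟨p, hp, hne, hE⟩ := hq
      obtain ⟨p', hp', hne', hE'⟩ := hq'
      have hpp : p ≠ p' := by rintro rfl; rw [hE] at hE'; exact hqq hE'
      have hm := hA.1.2.1 p hp p' hp' hpp
      obtain ⟨h1, h2, h3⟩ := inner_arc hn hA hp hne
      obtain ⟨h1', h2', h3'⟩ := inner_arc hn hA hp' hne'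
      obtain ⟨q1, q2⟩ := q; obtain ⟨q1', q2'⟩ := q'
      simp only [Prod.mk.injEq] at hE hE'
      simp only []
      omega
    · intro q hq q' hq'
      rw [memf] at hq hq'
      obtain ⟨p, hp, hne, hE⟩ := hq
      obtain ⟨p', hp', hne', hE'⟩ := hq'
      have hnc := hA.1.2.2 p hp p' hp'
      obtain ⟨h1, h2, h3⟩ := inner_arc hn hA hp hne
      obtain ⟨h1', h2', h3'⟩ := inner_arc hn hA hp' hne'
      obtain ⟨q1, q2⟩ := q; obtain ⟨q1', q2'⟩ := q'
      simp only [Prod.mk.injEq] at hE hE'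
      simp only []
      omega
  -- g produces irreducible structures
  have hgS : ∀ B, IsSecStr (n - 2) B → IsIrr n (g B) := by
    intro B hB
    refine ⟨⟨?_, ?_, ?_⟩, by omega, ?_⟩
    · intro q hq
      rw [memg] at hq
      rcases hq with rfl | ⟨p, hp, hE⟩
      · simp only []; omega
      · have hv := hB.1 p hp
        obtain ⟨q1, q2⟩ := q
        simp only [Prod.mk.injEq] at hE
        simp only []
        omega
    · intro q hq q' hq' hqq
      rw [memg] at hq hq'
      rcases hq with rfl | ⟨p, hp, hE⟩ <;> rcases hq' with rfl | ⟨p', hp', hE'⟩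
      · exact absurd rfl hqq
      · have hv' := hB.1 p' hp'
        obtain ⟨q1', q2'⟩ := q'
        simp only [Prod.mk.injEq] at hE'
        simp only []
        omega
      · have hv := hB.1 p hp
        obtain ⟨q1, q2⟩ := q
        simp only [Prod.mk.injEq] at hE
        simp only []
        omega
      · have hpp : p ≠ p' := by
          rintro rfl; rw [hE] at hE'; exact hqq hE'
        have hm := hB.2.1 p hp p' hp' hpp
        obtain ⟨q1, q2⟩ := q; obtain ⟨q1', q2'⟩ := q'
        simp only [Prod.mk.injEq] at hE hE'
        simp only []
        omega
    · intro q hq q' hq'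
      rw [memg] at hq hq'
      rcases hq with rfl | ⟨p, hp, hE⟩ <;> rcases hq' with rfl | ⟨p', hp', hE'⟩
      · simp
      · have hv' := hB.1 p' hp'
        obtain ⟨q1', q2'⟩ := q'
        simp only [Prod.mk.injEq] at hE'
        simp only []
        omega
      · have hv := hB.1 p hp
        obtain ⟨q1, q2⟩ := q
        simp only [Prod.mk.injEq] at hE
        simp only []
        omega
      · have hnc := hB.2.2 p hp p' hp'
        have hv := hB.1 p hp
        have hv' := hB.1 p' hp'
        obtain ⟨q1, q2⟩ := q; obtain ⟨q1', q2'⟩ := q'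
        simp only [Prod.mk.injEq] at hE hE'
        simp only []
        omega
    · intro j hj1 hj2
      apply Finset.card_pos.mpr
      refine ⟨(1, n), Finset.mem_filter.mpr ⟨?_, ?_, ?_⟩⟩
      · exact Finset.mem_insert_self _ _
      · simp; omega
      · simp; omega
  -- the equivalence
  refine ⟨{
    toFun := fun A => ⟨f A.1, hfS A.1 A.2⟩
    invFun := fun B => ⟨g B.1, hgS B.1 B.2⟩
    left_inv := ?_
    right_inv := ?_ }⟩
  · rintro ⟨A, hA⟩
    apply Subtype.ext
    simp only []
    ext q
    rw [memg]
    constructor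
    · rintro (rfl | ⟨p, hp, hE⟩)
      · exact arc_one_n hn hA
      · rw [memf] at hp
        obtain ⟨r, hr, hne, hE'⟩ := hp
        obtain ⟨h1, h2, h3⟩ := inner_arc hn hA hr hne
        have : (p.1 + 1, p.2 + 1) = r := by
          obtain ⟨p1, p2⟩ := p
          obtain ⟨r1, r2⟩ := r
          simp only [Prod.mk.injEq] at hE' ⊢
          simp only [] at h1 h2 h3
          omega
        rw [this] at hE; rwa [← hE]
    · intro hq
      by_cases hq1 : q = (1, n)
      · exact Or.inl hq1
      · refine Or.inr ⟨(q.1 - 1, q.2 - 1), ?_, ?_⟩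
        · rw [memf]; exact ⟨q, hq, hq1, rfl⟩
        · obtain ⟨h1, h2, h3⟩ := inner_arc hn hA hq hq1
          obtain ⟨q1, q2⟩ := q
          simp only [Prod.mk.injEq]
          simp only [] at h1 h2 h3
          omega
  · rintro ⟨B, hB⟩
    apply Subtype.ext
    simp only []
    ext q
    rw [memf]
    constructor
    · rintro ⟨p, hp, hne, hE⟩
      rw [memg] at hp
      rcases hp with rfl | ⟨r, hr, hE'⟩
      · exact absurd rfl hne
      · have : (p.1 - 1, p.2 - 1) = r := by
          obtain ⟨p1, p2⟩ := p; obtain ⟨r1, r2⟩ := r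
          simp only [Prod.mk.injEq] at hE' ⊢
          omega
        rw [this] at hE; rwa [← hE]
    · intro hq
      refine ⟨(q.1 + 1, q.2 + 1), ?_, ?_, ?_⟩
      · rw [memg]; exact Or.inr ⟨q, hq, rfl⟩
      · have hv := hB.1 q hq
        simp only [Prod.mk.injEq, ne_eq]
        omega
      · obtain ⟨q1, q2⟩ := q
        simp only [Prod.mk.injEq]
        omega
end

section
/- For u ∈ (0,1), W(z,u) admits a singular expansion at ρ = (3−√5)/2 of the form W(z,u) = C_0(u) + V(ρ,u) + r(ρ,u)·(ρ − z)^{1/2} + O(ρ − z), where r(ρ,u) = −(2/(2 − (3−√5)u)) · (df/dw)|_{w=α} · t(ρ,u) · √(8(3√5−5))/(3−√5)^2, with t(ρ,u) = (7 − 3√5)u/(2 − (3−√5)u), α = 2(−2+√5)u/(2 + (−3+√5)u), and (df/dw)|_{w=α} = ((2+(−3+√5)u)/(2+(−3+√5)u − 2(−2+√5)u^2))^2. -/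
open Finset Filter Topology Asymptotics

/-- The coefficient `r(ρ,u)` of `(ρ−z)^{1/2}` in the singular expansion of `W(z,u)`. -/
noncomputable def rcoef (u : ℝ) : ℝ :=
  -(2 / (2 - (3 - Real.sqrt 5) * u)) *
    ((2 + (-3 + Real.sqrt 5) * u) /
      ((2 + (-3 + Real.sqrt 5) * u) - 2 * (-2 + Real.sqrt 5) * u ^ 2)) ^ 2 *
    ((7 - 3 * Real.sqrt 5) * u / (2 - (3 - Real.sqrt 5) * u)) *
    Real.sqrt (8 * (3 * Real.sqrt 5 - 5)) / (3 - Real.sqrt 5) ^ 2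


/-! ### Auxiliary material for the singular expansion -/

/-- `D₀(u,z)`: the key denominator `2(1-zu) - u²(1-z-z²)`. -/
noncomputable def D0 (u z : ℝ) : ℝ := 2 * (1 - z * u) - u ^ 2 * (1 - z - z ^ 2)

/-- The regular part `A(z) = Φ(z,0)` of `W`. -/
noncomputable def Afun (u z : ℝ) : ℝ :=
  u * (1 - z - z ^ 2) / ((1 - z * u) * D0 u z) + z / (1 - z * u)

/-- `H(z)` with `(z²+z+1)(z²-3z+1) = (ρ-z)·H(z)`. -/
noncomputable def Hfun (z : ℝ) : ℝ := (z ^ 2 + z + 1) * ((3 + Real.sqrt 5) / 2 - z)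

/-- The square-root factor appearing in `S(z)`. -/
noncomputable def Rfun (z : ℝ) : ℝ := Real.sqrt ((z ^ 2 + z + 1) * (z ^ 2 - 3 * z + 1))

/-- The coefficient function `B(z) = √(H z) · Ψ(z,0)`. -/
noncomputable def Bfun (u z : ℝ) : ℝ := Real.sqrt (Hfun z) * (-2 * u / (D0 u z) ^ 2)

/-- The second-order part `Ψ₂(z,r)`. -/
noncomputable def Psi2 (u z r : ℝ) : ℝ := 2 * u ^ 3 / ((D0 u z + u ^ 2 * r) * (D0 u z) ^ 2)

lemma sqrt5_sq : Real.sqrt 5 ^ 2 = 5 := Real.sq_sqrt (by norm_num)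

lemma sqrt5_lt : Real.sqrt 5 < 3 := by
  nlinarith [sqrt5_sq, Real.sqrt_nonneg 5]

lemma sqrt5_gt : 2 < Real.sqrt 5 := by
  nlinarith [sqrt5_sq, Real.sqrt_nonneg 5]

lemma rho_pos : 0 < rho := by
  have := sqrt5_lt; unfold rho; linarith

lemma rho_lt_half : rho < 1 / 2 := by
  have := sqrt5_gt; unfold rho; linarith

lemma P_eq (z : ℝ) : (z ^ 2 + z + 1) * (z ^ 2 - 3 * z + 1) = (rho - z) * Hfun z := by
  unfold rho Hfun
  linear_combination ((z ^ 2 + z + 1) / 4) * sqrt5_sq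

lemma Hrho : Hfun rho = 6 * Real.sqrt 5 - 10 := by
  unfold rho Hfun
  linear_combination ((Real.sqrt 5 - 8) / 4) * sqrt5_sq

lemma Hrho_pos : 0 < Hfun rho := by
  rw [Hrho]; have := sqrt5_gt; linarith

lemma Rrho : Rfun rho = 0 := by
  have h : (rho ^ 2 + rho + 1) * (rho ^ 2 - 3 * rho + 1) = 0 := by
    unfold rho; linear_combination ((((3 - Real.sqrt 5) / 2) ^ 2 + (3 - Real.sqrt 5) / 2 + 1) / 4) * sqrt5_sq
  unfold Rfun
  rw [h, Real.sqrt_zero]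

lemma Rfun_split {z : ℝ} (hz : z ≤ rho) :
    Rfun z = Real.sqrt (rho - z) * Real.sqrt (Hfun z) := by
  unfold Rfun
  rw [P_eq, Real.sqrt_mul (by linarith)]

/-- The key algebraic decomposition of `W` as a rational function of `z` and `r`. -/
lemma master (u z r : ℝ) (hz : z ≠ 0) (ha : 1 - z * u ≠ 0) (hD0 : D0 u z ≠ 0)
    (hD : D0 u z + u ^ 2 * r ≠ 0) :
    u * z ^ 2 * ((1 - z + z ^ 2 - r) / (2 * z ^ 2) - 1) /
        ((1 - z * u) ^ 2 -
          (1 - z * u) * (z * u) ^ 2 * ((1 - z + z ^ 2 - r) / (2 * z ^ 2) - 1)) +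
      z / (1 - z * u)
    = Afun u z + r * (-2 * u / (D0 u z) ^ 2) + r ^ 2 * Psi2 u z r := by
  have hD0' : 2 * (1 - z * u) - u ^ 2 * (1 - z - z ^ 2) ≠ 0 := hD0
  have hD' : 2 * (1 - z * u) - u ^ 2 * (1 - z - z ^ 2) + u ^ 2 * r ≠ 0 := hD
  have hbig : (1 - z * u) ^ 2 -
      (1 - z * u) * (z * u) ^ 2 * ((1 - z + z ^ 2 - r) / (2 * z ^ 2) - 1)
      = (1 - z * u) * (2 * (1 - z * u) - u ^ 2 * (1 - z - z ^ 2) + u ^ 2 * r) / 2 := by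
    field_simp
    ring
  rw [hbig]
  unfold Afun Psi2 D0
  set a := 1 - z * u with hadef
  set D := 2 * a - u ^ 2 * (1 - z - z ^ 2) with hDdef
  field_simp
  rw [hDdef]
  ring

lemma wfun_eq (u z : ℝ) (hz : z ≠ 0) (ha : 1 - z * u ≠ 0) (hD0 : D0 u z ≠ 0)
    (hD : D0 u z + u ^ 2 * Rfun z ≠ 0) :
    Wfun z u = Afun u z + Rfun z * (-2 * u / (D0 u z) ^ 2)
      + Rfun z ^ 2 * Psi2 u z (Rfun z) := by
  have h := master u z (Rfun z) hz ha hD0 hD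
  unfold Wfun Sfun
  exact h

lemma D0rho_eq (u : ℝ) :
    D0 u rho = 2 + (-3 + Real.sqrt 5) * u - 2 * (-2 + Real.sqrt 5) * u ^ 2 := by
  unfold D0 rho
  linear_combination (u ^ 2 / 4) * sqrt5_sq

lemma D0rho_pos (u : ℝ) (hu0 : 0 < u) (hu1 : u < 1) : 0 < D0 u rho := by
  have hs3 := sqrt5_lt
  have hs2 := sqrt5_gt
  rw [D0rho_eq]
  nlinarith [mul_nonneg (sub_nonneg.mpr hu1.le) (sub_nonneg.mpr hs3.le),
    mul_nonneg (mul_nonneg (sub_nonneg.mpr hu1.le) (by linarith : (0:ℝ) ≤ 1 + u))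
      (by linarith : (0:ℝ) ≤ 2 * Real.sqrt 5 - 4)]

/-- The coefficient identity: `rcoef u = B(ρ)`. -/
lemma rcoef_eq (u : ℝ) (hu0 : 0 < u) (hu1 : u < 1) : rcoef u = Bfun u rho := by
  have hs : Real.sqrt 5 ^ 2 = 5 := sqrt5_sq
  have hs2 : 2 < Real.sqrt 5 := sqrt5_gt
  have hs3 : Real.sqrt 5 < 3 := sqrt5_lt
  have h8 : 8 * (3 * Real.sqrt 5 - 5) = 2 ^ 2 * Hfun rho := by rw [Hrho]; ring
  have hsq8 : Real.sqrt (8 * (3 * Real.sqrt 5 - 5)) = 2 * Real.sqrt (Hfun rho) := by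
    rw [h8, Real.sqrt_mul (by norm_num), Real.sqrt_sq (by norm_num)]
  have h32 : (3 - Real.sqrt 5) ^ 2 = 2 * (7 - 3 * Real.sqrt 5) := by linear_combination hs
  have hd1 : 2 - (3 - Real.sqrt 5) * u ≠ 0 := by nlinarith
  have hd1' : 2 + (-3 + Real.sqrt 5) * u ≠ 0 := by nlinarith
  have h73 : (7 : ℝ) - 3 * Real.sqrt 5 ≠ 0 := by nlinarith
  have hD0ne : D0 u rho ≠ 0 := (D0rho_pos u hu0 hu1).ne'
  unfold rcoef Bfun
  rw [hsq8, ← D0rho_eq, h32]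
  field_simp
  ring

/-- The singular expansion of `W(z,u)` at `ρ`:
`W(z,u) = C₀(u) + V(ρ,u) + r(ρ,u)·(ρ−z)^{1/2} + O(ρ−z)` as `z → ρ⁻`, with the
explicit coefficient `r(ρ,u)` given by `rcoef`. -/
theorem W_singular_expansion (u : ℝ) (hu0 : 0 < u) (hu1 : u < 1) :
    ∃ C0 : ℝ,
      (fun z : ℝ => Wfun z u -
          (C0 + rho / (1 - rho * u) + rcoef u * Real.sqrt (rho - z)))
        =O[nhdsWithin rho (Set.Iio rho)] (fun z : ℝ => rho - z) := by
  refine ⟨Afun u rho - rho / (1 - rho * u), ?_⟩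
  set l := nhdsWithin rho (Set.Iio rho) with hl
  have hle : l ≤ nhds rho := nhdsWithin_le_nhds
  have hρ0 := rho_pos
  have hρh := rho_lt_half
  have h1ρu : 0 < 1 - rho * u := by nlinarith
  have hD0ρ : 0 < D0 u rho := D0rho_pos u hu0 hu1
  -- continuity facts
  have hcD0 : Continuous fun z => D0 u z := by unfold D0; continuity
  have hcH : Continuous Hfun := by unfold Hfun; continuity
  have hcR : Continuous Rfun := by
    unfold Rfun
    exact (by continuity : Continuous fun z : ℝ => (z ^ 2 + z + 1) * (z ^ 2 - 3 * z + 1)).sqrt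
  -- eventual facts on the left neighbourhood
  have E1 : ∀ᶠ z in l, 0 < z :=
    Filter.Eventually.filter_mono hle (eventually_gt_nhds hρ0)
  have E2 : ∀ᶠ z in l, 0 < 1 - z * u := by
    have hc : Continuous fun z : ℝ => 1 - z * u := by continuity
    exact Filter.Eventually.filter_mono hle
      ((hc.tendsto rho).eventually (eventually_gt_nhds h1ρu))
  have E3 : ∀ᶠ z in l, 0 < D0 u z :=
    Filter.Eventually.filter_mono hle
      ((hcD0.tendsto rho).eventually (eventually_gt_nhds hD0ρ))
  have E4 : ∀ᶠ z in l, 0 < D0 u z + u ^ 2 * Rfun z := by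
    have hc : Continuous fun z => D0 u z + u ^ 2 * Rfun z := by
      exact hcD0.add (continuous_const.mul hcR)
    have hval : 0 < D0 u rho + u ^ 2 * Rfun rho := by
      rw [Rrho, mul_zero, add_zero]; exact hD0ρ
    exact Filter.Eventually.filter_mono hle
      ((hc.tendsto rho).eventually (eventually_gt_nhds hval))
  have E5 : ∀ᶠ z in l, 0 < Hfun z :=
    Filter.Eventually.filter_mono hle
      ((hcH.tendsto rho).eventually (eventually_gt_nhds Hrho_pos))
  have E6 : ∀ᶠ z in l, z < rho := by
    have := eventually_mem_nhdsWithin (a := rho) (s := Set.Iio rho)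
    exact this.mono fun z hz => hz
  -- the pointwise decomposition
  have hEq : (fun z : ℝ => Wfun z u -
        (Afun u rho - rho / (1 - rho * u) + rho / (1 - rho * u) +
          rcoef u * Real.sqrt (rho - z)))
      =ᶠ[l] fun z : ℝ => (Afun u z - Afun u rho) +
        Real.sqrt (rho - z) * (Bfun u z - Bfun u rho) +
        (rho - z) * (Hfun z * Psi2 u z (Rfun z)) := by
    filter_upwards [E1, E2, E3, E4, E5, E6] with z hz0 hza hzD0 hzD hzH hzρ
    have hw := wfun_eq u z hz0.ne' hza.ne' hzD0.ne' hzD.ne'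
    have hRz : Rfun z = Real.sqrt (rho - z) * Real.sqrt (Hfun z) := Rfun_split hzρ.le
    have hR2 : Rfun z ^ 2 = (rho - z) * Hfun z := by
      rw [hRz, mul_pow, Real.sq_sqrt (by linarith), Real.sq_sqrt hzH.le]
    rw [rcoef_eq u hu0 hu1, hw, hR2, hRz]
    unfold Bfun
    ring
  -- differentiability facts
  have hD0diff : DifferentiableAt ℝ (fun z => D0 u z) rho := by
    unfold D0; fun_prop
  have hAdiff : DifferentiableAt ℝ (fun z => Afun u z) rho := by
    unfold Afun
    apply DifferentiableAt.add
    · exact DifferentiableAt.div (by fun_prop)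
        ((by fun_prop : DifferentiableAt ℝ (fun z : ℝ => 1 - z * u) rho).mul hD0diff)
        (mul_ne_zero h1ρu.ne' hD0ρ.ne')
    · exact DifferentiableAt.div (by fun_prop) (by fun_prop) h1ρu.ne'
  have hBdiff : DifferentiableAt ℝ (fun z => Bfun u z) rho := by
    unfold Bfun
    apply DifferentiableAt.mul
    · exact DifferentiableAt.sqrt (by unfold Hfun; fun_prop) Hrho_pos.ne'
    · exact DifferentiableAt.div (by fun_prop) (hD0diff.pow 2) (pow_ne_zero 2 hD0ρ.ne')
  -- transfer (z - ρ) to (ρ - z)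
  have hsub : (fun z : ℝ => z - rho) =O[l] fun z : ℝ => rho - z := by
    apply Asymptotics.IsBigO.of_bound 1
    filter_upwards with z
    rw [Real.norm_eq_abs, Real.norm_eq_abs, abs_sub_comm, one_mul]
  have T1 : (fun z : ℝ => Afun u z - Afun u rho) =O[l] fun z : ℝ => rho - z :=
    (hAdiff.isBigO_sub.mono hle).trans hsub
  have hsqrtO : (fun z : ℝ => Real.sqrt (rho - z)) =O[l] fun _ : ℝ => (1 : ℝ) := by
    have hc : Continuous fun z : ℝ => Real.sqrt (rho - z) :=
      (by continuity : Continuous fun z : ℝ => rho - z).sqrt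
    have ht : Filter.Tendsto (fun z : ℝ => Real.sqrt (rho - z)) l
        (nhds (Real.sqrt (rho - rho))) := (hc.tendsto rho).mono_left hle
    exact ht.isBigO_one ℝ
  have T2 : (fun z : ℝ => Real.sqrt (rho - z) * (Bfun u z - Bfun u rho))
      =O[l] fun z : ℝ => rho - z := by
    have h := hsqrtO.mul ((hBdiff.isBigO_sub.mono hle).trans hsub)
    simpa only [one_mul] using h
  have T3 : (fun z : ℝ => (rho - z) * (Hfun z * Psi2 u z (Rfun z)))
      =O[l] fun z : ℝ => rho - z := by
    have hc : ContinuousAt (fun z => Hfun z * Psi2 u z (Rfun z)) rho := by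
      apply ContinuousAt.mul hcH.continuousAt
      unfold Psi2
      apply ContinuousAt.div continuousAt_const
      · exact ((hcD0.continuousAt.add
          (continuousAt_const.mul hcR.continuousAt)).mul (hcD0.continuousAt.pow 2))
      · rw [Rrho, mul_zero, add_zero]
        exact mul_ne_zero hD0ρ.ne' (pow_ne_zero 2 hD0ρ.ne')
    have hO : (fun z => Hfun z * Psi2 u z (Rfun z)) =O[l] fun _ : ℝ => (1 : ℝ) :=
      ((hc.tendsto).mono_left hle).isBigO_one ℝ
    have h := (Asymptotics.isBigO_refl (fun z : ℝ => rho - z) l).mul hO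
    simpa only [mul_one] using h
  exact ((T1.add T2).add T3).congr' hEq.symm Filter.EventuallyEq.rfl
end
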